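/- Let C ⊂ ℝ³ be a C² injective compact curve and η_n the cutoff functions built from a smooth profile χ. Then there exist n₀ ∈ ℕ and a constant C₀ > 0 such that for every natural number n > n₀, the function η_n is continuously differentiable on ℝ³ (ContDiff ℝ 1 η_n) and ‖fderiv ℝ η_n x‖ ≤ C₀ · n for every x ∈ ℝ³. -/

import Mathlib

open MeasureTheory Metric Set Filter
open scoped RealInnerProductSpace ContDiff SchwartzMap
open scoped Topology

noncomputable section

/-- Stability of nearest points: if `p` is the unique nearest point of `x` in compact `K`,
then nearest points of nearby `y` are close to `p`. -/
lemma nearest_stability {X : Type*} [MetricSpace X] {K : Set X} (hK : IsCompact K)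
    {x p : X} (hpd : dist x p = Metric.infDist x K)
    (huniq : ∀ q ∈ K, dist x q = Metric.infDist x K → q = p) :
    ∀ ε > 0, ∃ δ > 0, ∀ y : X, dist y x < δ →
      ∀ q ∈ K, dist y q = Metric.infDist y K → dist q p < ε := by
  by_contra h
  push_neg at h
  obtain ⟨ε, hε, hbad⟩ := h
  have H : ∀ k : ℕ, ∃ y : X, dist y x < 1/(k+1) ∧ ∃ q ∈ K,
      dist y q = Metric.infDist y K ∧ ε ≤ dist q p := by
    intro k
    obtain ⟨y, hy1, q, hq1, hq2, hq3⟩ := hbad (1/(k+1)) (by positivity)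
    exact ⟨y, hy1, q, hq1, hq2, hq3⟩
  choose y hy q hqK hqd hqp using H
  obtain ⟨qlim, hqlimK, φ, hφ, hconv⟩ := hK.tendsto_subseq hqK
  have hyx : Tendsto (fun k => y (φ k)) atTop (𝓝 x) := by
    rw [tendsto_iff_dist_tendsto_zero]
    apply squeeze_zero (fun k => dist_nonneg)
      (g := fun k : ℕ => 1/(k+1))
    · intro k
      refine le_trans (hy (φ k)).le ?_
      have hk : (k:ℝ)+1 ≤ (φ k : ℝ)+1 := by
        have h := (Nat.cast_le (α := ℝ)).mpr (hφ.id_le k); simp only [id] at h; linarith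
      exact one_div_le_one_div_of_le (by positivity) hk
    · exact tendsto_one_div_add_atTop_nhds_zero_nat
  have h1 : Tendsto (fun k => dist (y (φ k)) (q (φ k))) atTop (𝓝 (dist x qlim)) :=
    hyx.dist hconv
  have h2 : Tendsto (fun k => Metric.infDist (y (φ k)) K) atTop (𝓝 (Metric.infDist x K)) :=
    ((continuous_infDist_pt K).continuousAt (x := x)).tendsto.comp hyx
  have h3 : dist x qlim = Metric.infDist x K := by
    refine tendsto_nhds_unique ?_ h2
    simpa only [fun k => hqd (φ k)] using h1
  have h4 : qlim = p := huniq qlim hqlimK h3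
  have h5 : Tendsto (fun k => dist (q (φ k)) p) atTop (𝓝 (dist qlim p)) :=
    hconv.dist tendsto_const_nhds
  have h6 : ε ≤ dist qlim p := ge_of_tendsto h5 (Eventually.of_forall fun k => hqp (φ k))
  rw [h4, dist_self] at h6
  linarith

variable {E : Type*} [NormedAddCommGroup E] [InnerProductSpace ℝ E]

/-- If `p` is the unique nearest point of `x` in a compact set `K`, the squared distance
function is differentiable at `x` with derivative `h ↦ 2⟪x - p, h⟫`. -/
lemma hasFDerivAt_infDist_sq {K : Set E} (hK : IsCompact K) (hne : K.Nonempty)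
    {x p : E} (hpK : p ∈ K) (hpd : dist x p = Metric.infDist x K)
    (huniq : ∀ q ∈ K, dist x q = Metric.infDist x K → q = p) :
    HasFDerivAt (fun y => Metric.infDist y K ^ 2) ((2:ℝ) • (innerSL ℝ (x - p))) x := by
  rw [hasFDerivAt_iff_isLittleO_nhds_zero]
  rw [Asymptotics.isLittleO_iff]
  intro c hc
  obtain ⟨δ, hδ, hst⟩ := nearest_stability hK hpd huniq (c/2) (by linarith)
  have hmem : Metric.ball (0:E) (min δ c) ∈ 𝓝 (0:E) :=
    Metric.ball_mem_nhds _ (lt_min hδ hc)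
  filter_upwards [hmem] with h hh
  rw [Metric.mem_ball, dist_zero_right] at hh
  -- get a nearest point q of x + h
  obtain ⟨q, hqK, hqd⟩ := hK.exists_infDist_eq_dist hne (x + h)
  have hqd' : dist (x+h) q = Metric.infDist (x+h) K := hqd.symm
  have hq_close : dist q p < c/2 := by
    refine hst (x+h) ?_ q hqK hqd'
    simpa using lt_of_lt_of_le hh (min_le_left _ _)
  set a := Metric.infDist (x+h) K with ha
  set b := Metric.infDist x K with hb
  have ha0 : 0 ≤ a := Metric.infDist_nonneg
  have hb0 : 0 ≤ b := Metric.infDist_nonneg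
  -- upper bound : a^2 ≤ ‖x - p‖^2 + 2⟪x-p,h⟫ + ‖h‖^2  and b = ‖x-p‖
  have hbxp : b = ‖x - p‖ := by rw [← hpd, dist_eq_norm]
  have hup : a ^ 2 ≤ b ^ 2 + 2 * ⟪x - p, h⟫ + ‖h‖ ^ 2 := by
    have h1 : a ≤ ‖(x - p) + h‖ := by
      have := Metric.infDist_le_dist_of_mem (x := x + h) hpK
      rw [dist_eq_norm] at this
      refine le_trans this (le_of_eq ?_)
      rw [show x + h - p = x - p + h by abel]
    have h2 : a ^ 2 ≤ ‖(x - p) + h‖ ^ 2 := by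
      apply sq_le_sq' _ h1; nlinarith [norm_nonneg ((x-p)+h)]
    rw [norm_add_sq_real] at h2
    rw [hbxp]; linarith
  -- lower bound
  have hlow : b ^ 2 ≤ a ^ 2 - 2 * ⟪x + h - q, h⟫ + ‖h‖ ^ 2 := by
    have h1 : b ≤ ‖(x + h - q) + (-h)‖ := by
      have := Metric.infDist_le_dist_of_mem (x := x) hqK
      rw [dist_eq_norm] at this
      refine le_trans this (le_of_eq ?_)
      congr 1; abel
    have h2 : b ^ 2 ≤ ‖(x + h - q) + (-h)‖ ^ 2 := by
      apply sq_le_sq' _ h1; nlinarith [norm_nonneg ((x + h - q) + (-h))]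
    rw [norm_add_sq_real, inner_neg_right, norm_neg] at h2
    have h3 : ‖x + h - q‖ = a := by rw [← dist_eq_norm]; exact hqd'
    rw [h3] at h2; linarith
  have hinner : ⟪x + h - q, h⟫ = ⟪x - p, h⟫ + ‖h‖^2 + ⟪p - q, h⟫ := by
    rw [show x + h - q = (x - p) + h + (p - q) by abel, inner_add_left, inner_add_left,
      real_inner_self_eq_norm_sq]
  have hpq : |⟪p - q, h⟫| ≤ ‖p - q‖ * ‖h‖ := abs_real_inner_le_norm _ _
  have hpqn : ‖p - q‖ < c/2 := by rw [← dist_eq_norm, dist_comm]; exact hq_close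
  -- conclude
  simp only [ContinuousLinearMap.coe_smul', Pi.smul_apply, innerSL_apply_apply, smul_eq_mul,
    Real.norm_eq_abs]
  have hhc : ‖h‖ < c := lt_of_lt_of_le hh (min_le_right _ _)
  rw [abs_le]
  constructor
  · nlinarith [abs_le.mp hpq, norm_nonneg h]
  · nlinarith [abs_le.mp hpq, norm_nonneg h]

/-- Unique nearest point in a tube around a C² arclength-parametrized injective compact curve. -/
lemma tube_unique (γ : ℝ → E) {L : ℝ} (hL : 0 < L)
    (hγ : ContDiff ℝ 2 γ) (hγinj : Set.InjOn γ (Set.Icc 0 L))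
    (harc : ∀ s ∈ Set.Icc (0:ℝ) L, ‖deriv γ s‖ = 1) :
    ∃ ε > 0, ∀ x : E, Metric.infDist x (γ '' Set.Icc 0 L) < ε →
      ∀ p ∈ γ '' Set.Icc 0 L, ∀ q ∈ γ '' Set.Icc 0 L,
        dist x p = Metric.infDist x (γ '' Set.Icc 0 L) →
        dist x q = Metric.infDist x (γ '' Set.Icc 0 L) → p = q := by
  have hγd : Differentiable ℝ γ := hγ.differentiable (by norm_num)
  have h21 : (2 : WithTop ℕ∞) = 1 + 1 := by norm_num
  have hγ2 : ContDiff ℝ (1+1 : WithTop ℕ∞) γ := by rw [← h21]; exact hγ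
  have hγ' : ContDiff ℝ 1 (deriv γ) := (contDiff_succ_iff_deriv.mp hγ2).2.2
  have hγ'd : Differentiable ℝ (deriv γ) := hγ'.differentiable (by norm_num)
  have hγ''c : Continuous (deriv (deriv γ)) := (contDiff_one_iff_deriv.mp hγ').2
  obtain ⟨B, hB⟩ := isCompact_Icc.exists_bound_of_continuousOn
    (s := Set.Icc (0:ℝ) L) hγ''c.continuousOn
  set M := max B 1 with hM
  have hM0 : (0:ℝ) < M := lt_of_lt_of_le one_pos (le_max_right _ _)
  have hMB : ∀ u ∈ Set.Icc (0:ℝ) L, ‖deriv (deriv γ) u‖ ≤ M :=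
    fun u hu => le_trans (hB u hu) (le_max_left _ _)
  set δ := min (1/(4*M)) L with hδdef
  have hδ0 : 0 < δ := lt_min (by positivity) hL
  have hδM : δ ≤ 1/(4*M) := min_le_left _ _
  have hδL : δ ≤ L := min_le_right _ _
  set T : Set (ℝ × ℝ) := (Set.Icc 0 L ×ˢ Set.Icc 0 L) ∩ {st | δ ≤ |st.1 - st.2|} with hT
  have hTc : IsCompact T := (isCompact_Icc.prod isCompact_Icc).inter_right
    (isClosed_le continuous_const (continuous_fst.sub continuous_snd).abs)
  have hTne : T.Nonempty := by
    refine ⟨(0, L), ⟨⟨Set.left_mem_Icc.mpr hL.le, Set.right_mem_Icc.mpr hL.le⟩, ?_⟩⟩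
    simp only [Set.mem_setOf_eq]
    rw [abs_of_nonpos (by linarith)]
    linarith
  obtain ⟨⟨s₀, t₀⟩, hT₀, hmin⟩ := hTc.exists_isMinOn hTne
    ((hγ.continuous.comp continuous_fst).sub (hγ.continuous.comp continuous_snd)).norm.continuousOn
  set c := ‖γ s₀ - γ t₀‖ with hc
  have hc0 : 0 < c := by
    rw [hc, norm_pos_iff, sub_ne_zero]
    intro heq
    have hst01 : s₀ = t₀ := hγinj hT₀.1.1 hT₀.1.2 heq
    have h2 := hT₀.2
    rw [Set.mem_setOf_eq, hst01, sub_self, abs_zero] at h2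
    exact absurd h2 (not_le.mpr hδ0)
  refine ⟨min (c/3) (1/(8*M)), lt_min (by positivity) (by positivity), ?_⟩
  intro x hx p hp q hq hpd hqd
  set C := γ '' Set.Icc 0 L with hCdef
  set d := Metric.infDist x C with hd
  have hd0 : 0 ≤ d := Metric.infDist_nonneg
  have hdε1 : d < c/3 := lt_of_lt_of_le hx (min_le_left _ _)
  have hdε2 : d < 1/(8*M) := lt_of_lt_of_le hx (min_le_right _ _)
  -- key claim for ordered pairs
  have key : ∀ s t : ℝ, s ∈ Set.Icc 0 L → t ∈ Set.Icc 0 L → s < t →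
      dist x (γ s) = d → dist x (γ t) = d → False := by
    intro s t hs ht hst hds hdt
    have hsub : Set.Icc s t ⊆ Set.Icc 0 L := Set.Icc_subset_Icc hs.1 ht.2
    -- the two points are close
    have h2d : ‖γ s - γ t‖ ≤ 2 * d := by
      have : ‖γ s - γ t‖ ≤ dist (γ s) x + dist x (γ t) := by
        rw [← dist_eq_norm]; exact dist_triangle _ _ _
      rw [dist_comm (γ s) x] at this
      linarith [hds, hdt, this]
    -- so their parameters are close
    have htsδ : t - s < δ := by
      by_contra hcon
      push_neg at hcon
      have hmem : (s, t) ∈ T := ⟨⟨hs, ht⟩, by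
        simp only [Set.mem_setOf_eq]
        rw [abs_of_nonpos (by linarith)]
        linarith⟩
      have := hmin hmem
      simp only [Set.mem_setOf_eq] at this
      have hc3 : c ≤ ‖γ s - γ t‖ := this
      linarith
    -- Lipschitz bound for γ
    have hlip : ∀ a ∈ Set.Icc (0:ℝ) L, ∀ b ∈ Set.Icc (0:ℝ) L, ‖γ b - γ a‖ ≤ ‖b - a‖ := by
      intro a ha b hb
      have := (convex_Icc (0:ℝ) L).norm_image_sub_le_of_norm_hasDerivWithin_le
        (f := γ) (f' := deriv γ) (C := 1)
        (fun u hu => (hγd u).hasDerivAt.hasDerivWithinAt)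
        (fun u hu => le_of_eq (harc u hu)) ha hb
      simpa using this
    -- distance bound along the arc
    have hxb : ∀ u ∈ Set.Icc s t, ‖x - γ u‖ ≤ 1/(2*M) := by
      intro u hu
      have h1 : ‖x - γ u‖ ≤ ‖x - γ s‖ + ‖γ u - γ s‖ := by
        have := norm_sub_le_norm_sub_add_norm_sub x (γ s) (γ u)
        calc ‖x - γ u‖ ≤ ‖x - γ s‖ + ‖γ s - γ u‖ := norm_sub_le_norm_sub_add_norm_sub _ _ _
        _ = ‖x - γ s‖ + ‖γ u - γ s‖ := by rw [norm_sub_rev (γ s)]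
      have h2 : ‖γ u - γ s‖ ≤ u - s := by
        have := hlip s hs u (hsub hu)
        rwa [Real.norm_eq_abs, abs_of_nonneg (by linarith [hu.1])] at this
      have h3 : ‖x - γ s‖ = d := by rw [← dist_eq_norm]; exact hds
      have h4 : u - s ≤ δ := by linarith [hu.2, htsδ]
      have h5 : (1:ℝ)/(8*M) + 1/(4*M) ≤ 1/(2*M) := by
        rw [div_add_div _ _ (by positivity) (by positivity), div_le_div_iff₀ (by positivity) (by positivity)]
        ring_nf; nlinarith [hM0]
      linarith
    -- second derivative argument: u ↦ ‖x - γ u‖² is strictly convex on [s,t]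
    set g : ℝ → ℝ := fun u => ⟪x - γ u, x - γ u⟫ with hgdef
    set g1 : ℝ → ℝ := fun u => -2 * ⟪x - γ u, deriv γ u⟫ with hg1def
    have hγu : ∀ u : ℝ, HasDerivAt (fun v => x - γ v) (-deriv γ u) u :=
      fun u => ((hγd u).hasDerivAt).const_sub x
    have hg : ∀ u : ℝ, HasDerivAt g (g1 u) u := by
      intro u
      have h := HasDerivAt.inner ℝ (hγu u) (hγu u)
      convert h using 1
      show -2 * ⟪x - γ u, deriv γ u⟫ = _
      simp only [inner_neg_right, inner_neg_left]
      rw [real_inner_comm]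
      ring
      all_goals rfl
    have hg1 : ∀ u : ℝ, HasDerivAt g1
        (-2 * (⟪x - γ u, deriv (deriv γ) u⟫ + ⟪-deriv γ u, deriv γ u⟫)) u := by
      intro u
      exact (HasDerivAt.inner ℝ (hγu u) ((hγ'd u).hasDerivAt)).const_mul (-2)
    have hg1mono : StrictMonoOn g1 (Set.Icc s t) := by
      apply strictMonoOn_of_deriv_pos (convex_Icc s t)
      · exact (continuous_const.mul
          ((continuous_const.sub hγ.continuous).inner hγ'.continuous)).continuousOn
      · intro u hu
        rw [interior_Icc] at hu
        have huI : u ∈ Set.Icc 0 L := hsub ⟨hu.1.le, hu.2.le⟩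
        rw [(hg1 u).deriv]
        have h1 : ‖deriv γ u‖ = 1 := harc u huI
        have h2 : ⟪x - γ u, deriv (deriv γ) u⟫ ≤ ‖x - γ u‖ * ‖deriv (deriv γ) u‖ :=
          real_inner_le_norm _ _
        have h3 : ‖x - γ u‖ ≤ 1/(2*M) := hxb u ⟨hu.1.le, hu.2.le⟩
        have h4 : ‖deriv (deriv γ) u‖ ≤ M := hMB u huI
        have h5 : ⟪-deriv γ u, deriv γ u⟫ = -1 := by
          rw [inner_neg_left, real_inner_self_eq_norm_sq, h1]; norm_num
        have h6 : ‖x - γ u‖ * ‖deriv (deriv γ) u‖ ≤ (1/(2*M)) * M :=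
          mul_le_mul h3 h4 (norm_nonneg _) (by positivity)
        have h7 : (1/(2*M)) * M = 1/2 := by field_simp
        nlinarith [norm_nonneg (x - γ u), norm_nonneg (deriv (deriv γ) u)]
    have hgval : ∀ u : ℝ, g u = dist x (γ u)^2 := by
      intro u
      rw [hgdef]
      simp only []
      rw [real_inner_self_eq_norm_sq, dist_eq_norm]
    have hgmin : ∀ u ∈ Set.Icc s t, d^2 ≤ g u := by
      intro u hu
      have h1 : d ≤ dist x (γ u) := Metric.infDist_le_dist_of_mem ⟨u, hsub hu, rfl⟩
      rw [hgval u]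
      nlinarith [dist_nonneg (x := x) (y := γ u)]
    have hgs : g s = d^2 := by rw [hgval s, hds]
    have hgt : g t = d^2 := by rw [hgval t, hdt]
    have hg1s : 0 ≤ g1 s := by
      have hconv : Tendsto (slope g s) (𝓝[>] s) (𝓝 (g1 s)) :=
        (hasDerivAt_iff_tendsto_slope.mp (hg s)).mono_left
          (nhdsWithin_mono s fun u hu => hu.ne')
      refine ge_of_tendsto hconv ?_
      filter_upwards [Ioo_mem_nhdsGT_of_mem ⟨le_refl s, hst⟩] with u hu
      rw [slope_def_field]
      apply div_nonneg
      · rw [hgs] at *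
        linarith [hgmin u ⟨hu.1.le, hu.2.le⟩, hgs]
      · linarith [hu.1]
    have hg1t : g1 t ≤ 0 := by
      have hconv : Tendsto (slope g t) (𝓝[<] t) (𝓝 (g1 t)) :=
        (hasDerivAt_iff_tendsto_slope.mp (hg t)).mono_left
          (nhdsWithin_mono t fun u hu => ne_of_lt hu)
      refine le_of_tendsto hconv ?_
      filter_upwards [Ioo_mem_nhdsLT_of_mem ⟨hst, le_refl t⟩] with u hu
      rw [slope_def_field]
      apply div_nonpos_of_nonneg_of_nonpos
      · rw [hgt]
        linarith [hgmin u ⟨hu.1.le, hu.2.le⟩]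
      · linarith [hu.2]
    have hlt := hg1mono (Set.left_mem_Icc.mpr hst.le) (Set.right_mem_Icc.mpr hst.le) hst
    linarith
  obtain ⟨s, hs, rfl⟩ := hp
  obtain ⟨t, ht, rfl⟩ := hq
  by_contra hpq
  have hstne : s ≠ t := fun h => hpq (by rw [h])
  rcases lt_or_gt_of_ne hstne with h | h
  · exact absurd (key s t hs ht h hpd hqd) not_false
  · exact absurd (key t s ht hs h hqd hpd) not_false

abbrev E3 := EuclideanSpace ℝ (Fin 3)

set_option maxHeartbeats 1000000 in
set_option synthInstance.maxHeartbeats 400000 in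
/-- The cutoff functions `η_n(x) = χ(n · d(x, C))` around a C² injective compact curve
are C¹ with gradient of size O(n). -/
theorem cutoff_C1_and_fderiv_bound_of_C2_curve
    (γ : ℝ → E3) (L : ℝ) (hL : 0 < L)
    (hγ : ContDiff ℝ 2 γ) (hγinj : Set.InjOn γ (Set.Icc 0 L))
    (harc : ∀ s ∈ Set.Icc (0:ℝ) L, ‖deriv γ s‖ = 1)
    (C : Set E3) (hC : C = γ '' Set.Icc 0 L)
    (χ : ℝ → ℝ) (hχ : ContDiff ℝ ∞ χ)
    (hχ0 : ∀ s : ℝ, s < 1 → χ s = 0) (hχ1 : ∀ s : ℝ, 2 < s → χ s = 1)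
    (η : ℕ → E3 → ℝ) (hη : ∀ n x, η n x = χ (n * Metric.infDist x C)) :
    ∃ n₀ : ℕ, ∃ C₀ > 0, ∀ n : ℕ, n > n₀ →
      ContDiff ℝ 1 (η n) ∧ ∀ x : E3, ‖fderiv ℝ (η n) x‖ ≤ C₀ * n := by
  have hCcpt : IsCompact C := by rw [hC]; exact isCompact_Icc.image hγ.continuous
  have hCne : C.Nonempty := by
    rw [hC]; exact (Set.nonempty_Icc.mpr hL.le).image γ
  obtain ⟨ε, hε, huniq⟩ := tube_unique γ hL hγ hγinj harc
  rw [← hC] at huniq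
  -- nearest point selection
  have hsel : ∀ y : E3, ∃ p ∈ C, Metric.infDist y C = dist y p :=
    fun y => hCcpt.exists_infDist_eq_dist hCne y
  choose P hPC hPd using hsel
  have huniq' : ∀ x : E3, Metric.infDist x C < ε →
      ∀ q ∈ C, dist x q = Metric.infDist x C → q = P x := by
    intro x hx q hq hqd
    exact huniq x hx q hq (P x) (hPC x) hqd (hPd x).symm
  have hFd : ∀ x : E3, Metric.infDist x C < ε →
      HasFDerivAt (fun y => Metric.infDist y C ^ 2) ((2:ℝ) • (innerSL ℝ (x - P x))) x :=
    fun x hx => hasFDerivAt_infDist_sq hCcpt hCne (hPC x) (hPd x).symm (huniq' x hx)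
  have hPcont : ∀ x : E3, Metric.infDist x C < ε → ContinuousAt P x := by
    intro x hx
    rw [Metric.continuousAt_iff]
    intro ε' hε'
    obtain ⟨δ, hδ, hst⟩ := nearest_stability hCcpt (hPd x).symm (huniq' x hx) ε' hε'
    exact ⟨δ, hδ, fun {y} hyx => hst y hyx _ (hPC _) (hPd _).symm⟩
  have hopen : IsOpen {y : E3 | Metric.infDist y C < ε} :=
    isOpen_lt (continuous_infDist_pt C) continuous_const
  have hPon : ContinuousOn P {y : E3 | Metric.infDist y C < ε} :=
    fun y hy => (hPcont y hy).continuousWithinAt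
  -- squared distance is C¹ on the tube
  have hf1 : ∀ x : E3, Metric.infDist x C < ε →
      ContDiffAt ℝ 1 (fun y => Metric.infDist y C ^ 2) x := by
    intro x hx
    have h1 : ContDiffAt ℝ ((0:ℕ)+1) (fun y => Metric.infDist y C ^ 2) x := by
      rw [contDiffAt_succ_iff_hasFDerivAt]
      refine ⟨fun y => (2:ℝ) • (innerSL ℝ (y - P y)),
        ⟨{y | Metric.infDist y C < ε}, hopen.mem_nhds hx, fun y hy => hFd y hy⟩, ?_⟩
      have hz : ContDiffAt ℝ 0 (fun y : E3 => (2:ℝ) • (innerSL ℝ (y - P y))) x := by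
        rw [contDiffAt_zero]
        refine ⟨{y | Metric.infDist y C < ε}, hopen.mem_nhds hx, ?_⟩
        exact (continuousOn_const (c := (2:ℝ))).smul
          ((innerSL ℝ).continuous.comp_continuousOn (continuousOn_id.sub hPon))
      exact_mod_cast hz
    exact_mod_cast h1
  -- distance function as sqrt of its square
  have hfun : (fun y : E3 => Metric.infDist y C)
      = fun y => Real.sqrt (Metric.infDist y C ^ 2) :=
    funext fun y => (Real.sqrt_sq Metric.infDist_nonneg).symm
  have hd1 : ∀ x : E3, 0 < Metric.infDist x C → Metric.infDist x C < ε →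
      ContDiffAt ℝ 1 (fun y => Metric.infDist y C) x := by
    intro x h0 hx
    rw [hfun]
    exact (Real.contDiffAt_sqrt (by positivity)).comp x (hf1 x hx)
  have hdF : ∀ x : E3, 0 < Metric.infDist x C → Metric.infDist x C < ε →
      HasFDerivAt (fun y => Metric.infDist y C)
        ((1 / (2 * Real.sqrt (Metric.infDist x C ^ 2))) •
          ((2:ℝ) • (innerSL ℝ (x - P x)))) x := by
    intro x h0 hx
    rw [hfun]
    exact (Real.hasDerivAt_sqrt (by positivity)).comp_hasFDerivAt x (hFd x hx)
  have hdFnorm : ∀ x : E3, 0 < Metric.infDist x C →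
      ‖(1 / (2 * Real.sqrt (Metric.infDist x C ^ 2))) •
        ((2:ℝ) • (innerSL ℝ (x - P x)))‖ ≤ 1 := by
    intro x h0
    have hxP : ‖x - P x‖ = Metric.infDist x C := by
      rw [← dist_eq_norm]; exact (hPd x).symm
    rw [Real.sqrt_sq Metric.infDist_nonneg]
    have h2a : ‖(1 / (2 * Metric.infDist x C)) • ((2:ℝ) • (innerSL ℝ (x - P x)))‖
        = ‖(1 / (2 * Metric.infDist x C))‖ * ‖(2:ℝ) • (innerSL ℝ (x - P x))‖ := norm_smul (1 / (2 * Metric.infDist x C)) ((2:ℝ) • (innerSL ℝ (x - P x)))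
    have h2b : ‖(2:ℝ) • (innerSL ℝ (x - P x))‖ = ‖(2:ℝ)‖ * ‖innerSL ℝ (x - P x)‖ :=
      norm_smul (2:ℝ) (innerSL ℝ (x - P x))
    rw [h2a, h2b, innerSL_apply_norm, hxP, Real.norm_eq_abs, Real.norm_eq_abs,
      abs_of_pos (by positivity), abs_of_pos (by norm_num : (0:ℝ) < 2)]
    rw [div_mul_eq_mul_div, one_mul, div_le_one (by positivity)]
  -- bound on χ'
  have hχderiv : Continuous (deriv χ) := (contDiff_infty_iff_deriv.mp hχ).2.continuous
  obtain ⟨Mχ, hMχ⟩ := isCompact_Icc.exists_bound_of_continuousOn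
    (s := Set.Icc (1:ℝ) 2) hχderiv.continuousOn
  set C₀ := max Mχ 1 with hC₀def
  have hC₀ : (0:ℝ) < C₀ := lt_of_lt_of_le one_pos (le_max_right _ _)
  have hχ'le : ∀ u : ℝ, |deriv χ u| ≤ C₀ := by
    intro u
    rcases lt_or_ge u 1 with hu | hu1
    · have hev : χ =ᶠ[𝓝 u] fun _ => 0 :=
        eventually_of_mem (Iio_mem_nhds hu) (fun v hv => hχ0 v hv)
      rw [hev.deriv_eq, deriv_const]
      simp [hC₀.le]
    rcases lt_or_ge 2 u with hu2 | hu2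
    · have hev : χ =ᶠ[𝓝 u] fun _ => 1 :=
        eventually_of_mem (Ioi_mem_nhds hu2) (fun v hv => hχ1 v hv)
      rw [hev.deriv_eq, deriv_const]
      simp [hC₀.le]
    · calc |deriv χ u| = ‖deriv χ u‖ := (Real.norm_eq_abs _).symm
      _ ≤ Mχ := hMχ u ⟨hu1, hu2⟩
      _ ≤ C₀ := le_max_left _ _
  refine ⟨⌈2/ε⌉₊, C₀, hC₀, ?_⟩
  intro n hn
  have hn0 : 0 < n := lt_of_le_of_lt (Nat.zero_le _) hn
  have hn0' : (0:ℝ) < n := by exact_mod_cast hn0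
  have hnε : 2/ε < n := by
    have h1 : (⌈2/ε⌉₊ : ℝ) < n := by exact_mod_cast hn
    linarith [Nat.le_ceil (2/ε)]
  have h2nε : 2/(n:ℝ) < ε := by
    rw [div_lt_iff₀ hn0']
    rw [div_lt_iff₀ hε] at hnε
    linarith
  have hηfun : η n = fun y => χ ((n:ℝ) * Metric.infDist y C) := funext (hη n)
  have hopenA : IsOpen {y : E3 | (n:ℝ) * Metric.infDist y C < 1} :=
    isOpen_lt (continuous_const.mul (continuous_infDist_pt C)) continuous_const
  have hopenB : IsOpen {y : E3 | 2 < (n:ℝ) * Metric.infDist y C} :=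
    isOpen_lt continuous_const (continuous_const.mul (continuous_infDist_pt C))
  -- the three cases, giving ContDiffAt + HasFDerivAt info
  have hmain : ∀ x : E3, ContDiffAt ℝ 1 (η n) x ∧ ‖fderiv ℝ (η n) x‖ ≤ C₀ * n := by
    intro x
    rcases lt_or_ge ((n:ℝ) * Metric.infDist x C) 1 with hA | hA
    · have hev : η n =ᶠ[𝓝 x] fun _ => (0:ℝ) :=
        eventually_of_mem (hopenA.mem_nhds hA) (fun y hy => by rw [hη]; exact hχ0 _ hy)
      constructor
      · exact contDiffAt_const.congr_of_eventuallyEq hev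
      · rw [hev.fderiv_eq, fderiv_fun_const]
        simp [mul_nonneg hC₀.le hn0'.le]
    rcases lt_or_ge 2 ((n:ℝ) * Metric.infDist x C) with hB | hB
    · have hev : η n =ᶠ[𝓝 x] fun _ => (1:ℝ) :=
        eventually_of_mem (hopenB.mem_nhds hB) (fun y hy => by rw [hη]; exact hχ1 _ hy)
      constructor
      · exact contDiffAt_const.congr_of_eventuallyEq hev
      · rw [hev.fderiv_eq, fderiv_fun_const]
        simp [mul_nonneg hC₀.le hn0'.le]
    · -- transition region
      have h0 : 0 < Metric.infDist x C := by
        rcases lt_or_ge 0 (Metric.infDist x C) with h | h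
        · exact h
        · exfalso
          have : (n:ℝ) * Metric.infDist x C ≤ 0 :=
            mul_nonpos_of_nonneg_of_nonpos hn0'.le h
          linarith
      have hxε : Metric.infDist x C < ε := by
        have : Metric.infDist x C ≤ 2 / n := by
          rw [le_div_iff₀ hn0']; linarith [hB]
        linarith [h2nε]
      have h1e : (1 : WithTop ℕ∞) ≤ ∞ := by exact_mod_cast (le_top : (1:ℕ∞) ≤ ⊤)
      constructor
      · rw [hηfun]
        exact ((hχ.of_le h1e).contDiffAt).comp x (contDiffAt_const.mul (hd1 x h0 hxε))
      · have hdd := hdF x h0 hxε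
        have hmul : HasFDerivAt (fun y => (n:ℝ) * Metric.infDist y C)
            ((n:ℝ) • ((1 / (2 * Real.sqrt (Metric.infDist x C ^ 2))) •
              ((2:ℝ) • (innerSL ℝ (x - P x))))) x := hdd.const_mul (n:ℝ)
        have hχd : HasDerivAt χ (deriv χ ((n:ℝ) * Metric.infDist x C))
            ((n:ℝ) * Metric.infDist x C) :=
          ((hχ.differentiable (by simp)) _).hasDerivAt
        have hcomp := hχd.comp_hasFDerivAt x hmul
        have heq : η n = χ ∘ (fun y => (n:ℝ) * Metric.infDist y C) := hηfun
        rw [heq, hcomp.fderiv, norm_smul, norm_smul]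
        have hb1 := hχ'le ((n:ℝ) * Metric.infDist x C)
        have hb2 := hdFnorm x h0
        rw [Real.norm_eq_abs, Real.norm_eq_abs, abs_of_pos hn0']
        calc |deriv χ ((n:ℝ) * Metric.infDist x C)| *
            ((n:ℝ) * ‖(1 / (2 * Real.sqrt (Metric.infDist x C ^ 2))) •
              ((2:ℝ) • (innerSL ℝ (x - P x)))‖)
            ≤ C₀ * ((n:ℝ) * 1) := by
              apply mul_le_mul hb1 _ (by positivity) hC₀.le
              apply mul_le_mul_of_nonneg_left hb2 hn0'.le
        _ = C₀ * n := by ring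
  exact ⟨contDiff_iff_contDiffAt.mpr (fun x => (hmain x).1), fun x => (hmain x).2⟩
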